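/- Let A be a semi-pre-C*-algebra over ℂ and let S ⊆ A be a unital *-subspace, i.e. a ℂ-linear subspace containing 1 and closed under the involution. Then every state on S extends to a state on A (Krein's extension theorem). -/

import Mathlib

/-- A *-positive cone making a unital complex *-algebra `A` into a
semi-pre-C*-algebra. -/
structure IsSemiPreCstarCone (A : Type*) [Ring A] [Algebra ℂ A] [StarRing A]
    (P : Set A) : Prop where
  herm : ∀ a ∈ P, star a = a
  smul_one_mem : ∀ t : ℝ, 0 ≤ t → ((t : ℂ) • (1 : A)) ∈ P
  smul_add_mem : ∀ l : ℝ, 0 ≤ l → ∀ a ∈ P, ∀ b ∈ P, (l : ℂ) • a + b ∈ P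
  conj_mem : ∀ a ∈ P, ∀ x : A, star x * a * x ∈ P
  archimedean : ∀ x : A, ∃ R : ℝ, 0 < R ∧ (R : ℂ) • (1 : A) - star x * x ∈ P

/-- A state on a semi-pre-C*-algebra `(A, P)`. -/
structure IsStateOn {A : Type*} [Ring A] [Algebra ℂ A] [StarRing A]
    (P : Set A) (φ : A →ₗ[ℂ] ℂ) : Prop where
  map_one : φ 1 = 1
  map_star : ∀ x : A, φ (star x) = starRingEnd ℂ (φ x)
  pos : ∀ a ∈ P, ∃ r : ℝ, 0 ≤ r ∧ φ a = r

namespace KreinAux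

variable {A : Type*} [Ring A] [Algebra ℂ A] [StarRing A] {P : Set A}
  (hP : IsSemiPreCstarCone A P)

include hP

theorem zero_mem : (0:A) ∈ P := by simpa using hP.smul_one_mem 0 le_rfl

theorem one_mem : (1:A) ∈ P := by simpa using hP.smul_one_mem 1 zero_le_one

theorem add_mem {a b : A} (ha : a ∈ P) (hb : b ∈ P) : a + b ∈ P := by
  simpa using hP.smul_add_mem 1 zero_le_one a ha b hb

theorem smul_mem {l : ℝ} (hl : 0 ≤ l) {a : A} (ha : a ∈ P) : (l:ℂ) • a ∈ P := by
  simpa using hP.smul_add_mem l hl a ha 0 (zero_mem hP)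

theorem halve {a : A} (ha : a + a ∈ P) : a ∈ P := by
  have h := smul_mem hP (l := 1/2) (by norm_num) ha
  have : ((1/2 : ℝ) : ℂ) • (a + a) = a := by
    push_cast
    match_scalars
    norm_num
  rwa [this] at h

theorem sq_mem (x : A) : star x * x ∈ P := by
  simpa using hP.conj_mem 1 (one_mem hP) x

theorem star_coe_smul_one (r : ℝ) : star ((r:ℂ) • (1:A)) = (r:ℂ) • 1 := by
  rcases le_or_gt 0 r with h | h
  · exact hP.herm _ (hP.smul_one_mem r h)
  · have h1 := hP.herm _ (hP.smul_one_mem (-r) (by linarith))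
    push_cast at h1
    rw [neg_smul, star_neg, neg_inj] at h1
    exact h1

theorem star_real_smul (r : ℝ) (x : A) : star ((r:ℂ) • x) = (r:ℂ) • star x := by
  have e1 : (r:ℂ) • x = ((r:ℂ) • (1:A)) * x := by rw [smul_mul_assoc, one_mul]
  rw [e1, star_mul, star_coe_smul_one hP, mul_smul_comm, mul_one]

/-- upper archimedean bound for hermitian elements -/
theorem upper {a : A} (ha : star a = a) : ∃ t : ℝ, (t:ℂ) • (1:A) - a ∈ P := by
  obtain ⟨R, hR, h1⟩ := hP.archimedean (1 + a)
  have h2 : star (1+a) * (1+a) = 1 + a + a + a*a := by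
    rw [star_add, star_one, ha]; noncomm_ring
  rw [h2] at h1
  have h3 : a * a ∈ P := by have := sq_mem hP a; rwa [ha] at this
  have h4 := add_mem hP h1 h3
  have h5 := smul_mem hP (l := 1/2) (by norm_num) h4
  refine ⟨(R-1)/2, ?_⟩
  have : (((R-1)/2 : ℝ) : ℂ) • (1:A) - a
      = ((1/2 : ℝ):ℂ) • ((R:ℂ) • (1:A) - (1 + a + a + a*a) + a*a) := by
    push_cast
    match_scalars <;> ring
  rwa [this]

theorem lower {a : A} (ha : star a = a) : ∃ s : ℝ, (s:ℂ) • (1:A) + a ∈ P := by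
  obtain ⟨t, ht⟩ := upper hP (a := -a) (by rw [star_neg, ha])
  exact ⟨t, by simpa [sub_neg_eq_add] using ht⟩

theorem lower_nonneg {a : A} (ha : star a = a) :
    ∃ s : ℝ, 0 ≤ s ∧ (s:ℂ) • (1:A) + a ∈ P := by
  obtain ⟨t, ht⟩ := lower hP ha
  refine ⟨max t 0, le_max_right _ _, ?_⟩
  have h2 := hP.smul_add_mem (max t 0 - t) (by simp) 1 (one_mem hP) _ ht
  have : ((max t 0 : ℝ):ℂ) • (1:A) + a
      = ((max t 0 - t : ℝ):ℂ) • (1:A) + ((t:ℂ) • (1:A) + a) := by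
    push_cast
    match_scalars <;> ring
  rwa [this]


open Complex in
theorem comm_smul_one (c : ℂ) (y : A) : (c • (1:A)) * y = y * (c • 1) := by
  rw [smul_mul_assoc, one_mul, mul_smul_comm, mul_one]

omit hP in
theorem smul_eq_mul_one (c : ℂ) (y : A) : c • y = (c • (1:A)) * y := by
  rw [smul_mul_assoc, one_mul]

/-- `u = star (I • 1)` -/
noncomputable def uu (A : Type*) [Ring A] [Algebra ℂ A] [StarRing A] : A :=
  star (Complex.I • (1:A))

omit hP in
theorem u_central (x : A) : uu A * x = x * uu A := by
  have h1 : uu A * x = star (star x * (Complex.I • 1)) := by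
    rw [star_mul, star_star]; rfl
  have h2 : x * uu A = star ((Complex.I • (1:A)) * star x) := by
    rw [star_mul, star_star]; rfl
  rw [h1, h2, smul_mul_assoc, one_mul, mul_smul_comm, mul_one]

omit hP in
theorem u_mul_u : uu A * uu A = -1 := by
  have h1 : uu A * uu A = star ((Complex.I • (1:A)) * (Complex.I • (1:A))) := by
    rw [star_mul]; rfl
  rw [h1, smul_mul_assoc, one_mul, smul_smul, Complex.I_mul_I]
  simp

omit hP in
theorem star_u : star (uu A) = Complex.I • (1:A) := star_star _

/-- `w = (I•1) * u`, a central hermitian square root of 1. -/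
noncomputable def ww (A : Type*) [Ring A] [Algebra ℂ A] [StarRing A] : A :=
  (Complex.I • (1:A)) * uu A

omit hP in
theorem w_eq_smul : ww A = Complex.I • uu A := by
  rw [ww, smul_mul_assoc, one_mul]

omit hP in
theorem w_central (x : A) : ww A * x = x * ww A := by
  rw [w_eq_smul, smul_mul_assoc, mul_smul_comm, u_central]

omit hP in
theorem star_w : star (ww A) = ww A := by
  show star ((Complex.I • (1:A)) * uu A) = (Complex.I • (1:A)) * uu A
  rw [star_mul, star_u]
  rfl

omit hP in
theorem w_mul_w : ww A * ww A = 1 := by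
  rw [w_eq_smul, smul_mul_assoc, mul_smul_comm, smul_smul, Complex.I_mul_I, u_mul_u]
  simp

theorem w_mul_mem {a : A} (ha : a ∈ P) : ww A * a ∈ P := by
  have h := hP.conj_mem a ha (Complex.I • (1:A))
  have e : star (Complex.I • (1:A)) * a * (Complex.I • (1:A)) = ww A * a := by
    show uu A * a * (Complex.I • (1:A)) = ww A * a
    rw [mul_assoc, mul_smul_comm, mul_one, mul_smul_comm, w_eq_smul, smul_mul_assoc]
  rwa [e] at h

/-- `b = (1 - w) * a ∈ P` for `a ∈ P`. -/
theorem b_mem {a : A} (ha : a ∈ P) : (1 - ww A) * a ∈ P := by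
  have hsb : star (1 - ww A) = 1 - ww A := by rw [star_sub, star_one, star_w]
  have h := hP.conj_mem a ha (1 - ww A)
  rw [hsb] at h
  have e : (1 - ww A) * a * (1 - ww A) = (1 - ww A) * a + (1 - ww A) * a := by
    have hc : a * (1 - ww A) = (1 - ww A) * a := by
      rw [mul_sub, sub_mul, mul_one, one_mul, w_central]
    rw [mul_assoc, hc, ← mul_assoc, sub_mul, mul_sub, mul_sub, one_mul, mul_one,
      w_mul_w]
    noncomm_ring
  rw [e] at h
  exact halve hP h


theorem quad_identity (s : ℝ) (c : A) :
    star (1 + (s:ℂ) • (Complex.I • (1:A))) * c * (1 + (s:ℂ) • (Complex.I • (1:A)))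
      = c + (s:ℂ) • (Complex.I • c + uu A * c)
        + ((s*s : ℝ):ℂ) • (Complex.I • (uu A * c)) := by
  rw [star_add, star_one, star_real_smul hP]
  show (1 + (s:ℂ) • uu A) * c * (1 + (s:ℂ) • (Complex.I • (1:A))) = _
  simp only [mul_add, add_mul, one_mul, mul_one, smul_mul_assoc, mul_smul_comm,
    smul_smul, smul_add]
  push_cast
  match_scalars <;> ring

theorem quad_mem {a : A} (ha : a ∈ P) (s : ℝ) :
    a + (s:ℂ) • (Complex.I • a + uu A * a) + ((s*s:ℝ):ℂ) • (Complex.I • (uu A * a)) ∈ P := by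
  have h := hP.conj_mem a ha (1 + (s:ℂ) • (Complex.I • (1:A)))
  rwa [quad_identity hP] at h

omit hP in
theorem w_mul_b (a : A) : ww A * ((1 - ww A) * a) = -((1 - ww A) * a) := by
  rw [← mul_assoc, mul_sub, mul_one, w_mul_w, ← neg_sub, neg_mul]

omit hP in
theorem zb_eq (a : A) :
    Complex.I • ((1 - ww A) * a) + uu A * ((1 - ww A) * a)
      = (2:ℂ) • (Complex.I • a + uu A * a) := by
  have h1 : ww A * a = Complex.I • (uu A * a) := by rw [w_eq_smul, smul_mul_assoc]
  have h2 : uu A * (ww A * a) = -(Complex.I • a) := by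
    rw [h1, mul_smul_comm, ← mul_assoc, u_mul_u, neg_one_mul, smul_neg]
  have h3 : Complex.I • (ww A * a) = -(uu A * a) := by
    rw [h1, smul_smul, Complex.I_mul_I, neg_one_smul]
  rw [sub_mul, one_mul, mul_sub, smul_sub, h2, h3]
  module

theorem star_I_smul {a : A} (ha : star a = a) : star (Complex.I • a) = uu A * a := by
  have e0 : star (Complex.I • (1:A)) = uu A := rfl
  rw [smul_eq_mul_one, star_mul, e0, ha, ← u_central]

theorem g_I_zero (g : A →ₗ[ℝ] ℝ) (hgP : ∀ a ∈ P, 0 ≤ g a)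
    (hgstar : ∀ x, g (star x) = g x) {a : A} (ha : a ∈ P) :
    g (Complex.I • a) = 0 := by
  have hgua : ∀ c ∈ P, g (uu A * c) = g (Complex.I • c) := by
    intro c hc
    rw [← star_I_smul hP (hP.herm c hc), hgstar]
  set b := (1 - ww A) * a with hb
  have hbP : b ∈ P := b_mem hP ha
  have hwbP : ww A * b ∈ P := w_mul_mem hP hbP
  have hwb_neg : ww A * b = -b := w_mul_b a
  have hgb : g b = 0 := by
    have h1 := hgP _ hbP
    have h2 := hgP _ hwbP
    rw [hwb_neg, map_neg] at h2
    linarith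
  have hgwb : g (ww A * b) = 0 := by rw [hwb_neg, map_neg, hgb, neg_zero]
  have hIub : Complex.I • (uu A * b) = ww A * b := by rw [w_eq_smul, smul_mul_assoc]
  have hquad : ∀ s : ℝ, 0 ≤ g b + s * g (Complex.I • b + uu A * b)
      + s * s * g (ww A * b) := by
    intro s
    have h := hgP _ (quad_mem hP hbP s)
    rw [hIub, Complex.coe_smul, Complex.coe_smul, map_add, map_add, map_smul,
      map_smul] at h
    simpa using h
  have hbeta : g (Complex.I • b + uu A * b) = 0 := by
    have h1 := hquad 1
    have h2 := hquad (-1)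
    rw [hgb, hgwb] at h1 h2
    linarith
  have hfin : g (Complex.I • b + uu A * b) = 2 * (g (Complex.I • a) + g (Complex.I • a)) := by
    rw [hb, zb_eq]
    have e2 : ((2:ℝ):ℂ) = (2:ℂ) := by norm_num
    rw [← e2, Complex.coe_smul, map_smul, map_add, hgua a ha, smul_eq_mul]
  rw [hbeta] at hfin
  linarith

end KreinAux

open KreinAux Pointwise

/-- Krein's extension theorem: every state on a unital *-subspace `S` of a
semi-pre-C*-algebra `A` (a unital self-adjoint linear functional on `S` that is
nonnegative on `S ∩ A₊`) extends to a state on `A`. -/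
theorem krein_state_extension
    {A : Type*} [Ring A] [Algebra ℂ A] [StarRing A] (P : Set A)
    (hP : IsSemiPreCstarCone A P)
    (S : Submodule ℂ A) (hone : (1 : A) ∈ S) (hstar : ∀ x ∈ S, star x ∈ S)
    (ψ : S →ₗ[ℂ] ℂ)
    (ψ_one : ψ ⟨1, hone⟩ = 1)
    (ψ_star : ∀ (x : A) (hx : x ∈ S), ψ ⟨star x, hstar x hx⟩ = starRingEnd ℂ (ψ ⟨x, hx⟩))
    (ψ_pos : ∀ (x : A) (hx : x ∈ S), x ∈ P → ∃ r : ℝ, 0 ≤ r ∧ ψ ⟨x, hx⟩ = r) :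
    ∃ φ : A →ₗ[ℂ] ℂ, IsStateOn P φ ∧ ∀ (x : A) (hx : x ∈ S), φ x = ψ ⟨x, hx⟩ := by
  classical
  by_cases hpos : ∀ t : ℝ, ((t:ℂ) • (1:A)) ∈ P → 0 ≤ t
  swap
  · exfalso
    push_neg at hpos
    obtain ⟨t, htP, ht⟩ := hpos
    have hmem : (t:ℂ) • (1:A) ∈ S := S.smul_mem _ hone
    obtain ⟨r, hr, hψ⟩ := ψ_pos _ hmem htP
    have e : (⟨(t:ℂ) • (1:A), hmem⟩ : S) = (t:ℂ) • (⟨1, hone⟩ : S) := rfl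
    rw [e, map_smul, ψ_one, smul_eq_mul, mul_one] at hψ
    have : t = r := by exact_mod_cast hψ
    linarith
  -- the sublinear functional
  have hm_star : ∀ x : A, star (x + star x) = x + star x := fun x => by
    rw [star_add, star_star, add_comm]
  set T : A → Set ℝ := fun x => {t : ℝ | (t:ℂ) • (1:A) - (x + star x) ∈ P} with hT
  have Tne : ∀ x, (T x).Nonempty := fun x => upper hP (hm_star x)
  have Tlb : ∀ x, ∃ s:ℝ, ∀ t ∈ T x, -s ≤ t := by
    intro x
    obtain ⟨s, hs⟩ := lower hP (hm_star x)
    refine ⟨s, fun t ht => ?_⟩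
    have h1 := add_mem hP ht hs
    have e : ((t:ℂ) • (1:A) - (x + star x)) + ((s:ℂ) • (1:A) + (x + star x))
        = (((t+s : ℝ)):ℂ) • (1:A) := by
      push_cast; match_scalars <;> ring
    rw [e] at h1
    have := hpos _ h1
    linarith
  have Tbdd : ∀ x, BddBelow (T x) := by
    intro x
    obtain ⟨s, hs⟩ := Tlb x
    exact ⟨-s, fun t ht => hs t ht⟩
  set N : A → ℝ := fun x => sInf (T x) / 2 with hN
  have key_smul : ∀ (d : ℝ), 0 < d → ∀ y : A, ∀ t ∈ T y, d * t ∈ T (d • y) := by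
    intro d hd y t ht
    simp only [hT, Set.mem_setOf_eq] at ht ⊢
    have hmy : d • y + star (d • y) = (d:ℂ) • (y + star y) := by
      rw [← Complex.coe_smul, star_real_smul hP, smul_add]
    rw [hmy]
    have h2 := smul_mem hP hd.le ht
    have e : (d:ℂ) • ((t:ℂ) • (1:A) - (y + star y))
        = ((d*t : ℝ):ℂ) • (1:A) - (d:ℂ) • (y + star y) := by
      push_cast; match_scalars <;> ring
    rwa [e] at h2
  have N_hom : ∀ c : ℝ, 0 < c → ∀ x : A, N (c • x) = c * N x := by
    intro c hc x
    have hTc : T (c • x) = c • T x := by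
      ext t
      constructor
      · intro htc
        refine ⟨c⁻¹ * t, ?_, by show c * (c⁻¹ * t) = t; rw [← mul_assoc, mul_inv_cancel₀ hc.ne', one_mul]⟩
        have h2 := key_smul c⁻¹ (inv_pos.mpr hc) (c • x) t htc
        rwa [smul_smul, inv_mul_cancel₀ hc.ne', one_smul] at h2
      · rintro ⟨s, hs, rfl⟩
        exact key_smul c hc x s hs
    simp only [hN, hTc, Real.sInf_smul_of_nonneg hc.le, smul_eq_mul]
    ring
  have N_add : ∀ x y : A, N (x + y) ≤ N x + N y := by
    intro x y
    have key : ∀ t ∈ T x, ∀ s ∈ T y, t + s ∈ T (x + y) := by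
      intro t ht s hs
      simp only [hT, Set.mem_setOf_eq] at ht hs ⊢
      have h1 := add_mem hP ht hs
      have e : ((t:ℂ)•(1:A) - (x + star x)) + ((s:ℂ)•(1:A) - (y + star y))
          = ((t+s:ℝ):ℂ)•(1:A) - ((x+y) + star (x+y)) := by
        rw [star_add]; push_cast; match_scalars <;> ring
      rwa [e] at h1
    have h3 : sInf (T (x+y)) - sInf (T y) ≤ sInf (T x) := by
      refine le_csInf (Tne x) fun t ht => ?_
      have h4 : sInf (T (x+y)) - t ≤ sInf (T y) := by
        refine le_csInf (Tne y) fun s hs => ?_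
        have h5 := csInf_le (Tbdd (x+y)) (key t ht s hs)
        linarith
      linarith
    simp only [hN]
    linarith
  -- the partial functional
  let fdom : Submodule ℝ A := S.restrictScalars ℝ
  let f0 : fdom →ₗ[ℝ] ℝ :=
    { toFun := fun x => (ψ ⟨x.1, x.2⟩).re
      map_add' := by
        intro x y
        show (ψ (⟨x.1, x.2⟩ + ⟨y.1, y.2⟩)).re = _
        rw [map_add, Complex.add_re]
      map_smul' := by
        intro r x
        show (ψ ((r:ℂ) • ⟨x.1, x.2⟩)).re = _
        rw [map_smul]
        simp [Complex.mul_re] }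
  have hf : ∀ x : (LinearPMap.mk fdom f0).domain, (LinearPMap.mk fdom f0) x ≤ N x.1 := by
    rintro ⟨x, hx⟩
    show (ψ ⟨x, hx⟩).re ≤ sInf (T x) / 2
    have h6 : 2 * (ψ ⟨x, hx⟩).re ≤ sInf (T x) := by
      refine le_csInf (Tne x) fun t ht => ?_
      simp only [hT, Set.mem_setOf_eq] at ht
      have hxS : x ∈ S := hx
      have hqS : (t:ℂ) • (1:A) - (x + star x) ∈ S :=
        sub_mem (S.smul_mem _ hone) (add_mem hxS (hstar x hxS))
      obtain ⟨r, hr, hψq⟩ := ψ_pos _ hqS ht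
      have e : (⟨(t:ℂ) • (1:A) - (x + star x), hqS⟩ : S)
          = (t:ℂ) • (⟨1, hone⟩ : S) - (⟨x, hxS⟩ + ⟨star x, hstar x hxS⟩) := rfl
      rw [e, map_sub, map_add, map_smul, ψ_one, ψ_star x hxS] at hψq
      have := congrArg Complex.re hψq
      simp only [Complex.sub_re, Complex.add_re, Complex.conj_re, Complex.smul_re,
        Complex.one_re, Complex.ofReal_re, smul_eq_mul, mul_one] at this
      linarith
    linarith
  obtain ⟨g, hg1, hg2⟩ := exists_extension_of_le_sublinear (LinearPMap.mk fdom f0) N N_hom N_add hf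
  have gS : ∀ (x:A) (hx : x ∈ S), g x = (ψ ⟨x, hx⟩).re := fun x hx => hg1 ⟨x, hx⟩
  -- positivity of g on P
  have gP : ∀ a ∈ P, 0 ≤ g a := by
    intro a ha
    have h0 : (0:ℝ) ∈ T (-a) := by
      simp only [hT, Set.mem_setOf_eq]
      have e : ((0:ℝ):ℂ) • (1:A) - (-a + star (-a)) = a + a := by
        rw [star_neg, hP.herm a ha]; push_cast; match_scalars <;> ring
      rw [e]; exact add_mem hP ha ha
    have h1 := (hg2 (-a)).trans (by
      have := csInf_le (Tbdd (-a)) h0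
      show sInf (T (-a)) / 2 ≤ 0
      linarith)
    rw [map_neg] at h1
    linarith
  -- g is star-invariant
  have gkey : ∀ y : A, y + star y = 0 → g y ≤ 0 := by
    intro y hy
    have h0 : (0:ℝ) ∈ T y := by
      simp only [hT, Set.mem_setOf_eq, hy]
      simpa using zero_mem hP
    refine (hg2 y).trans ?_
    have := csInf_le (Tbdd y) h0
    show sInf (T y) / 2 ≤ 0
    linarith
  have gstar : ∀ x : A, g (star x) = g x := by
    intro x
    have h2 := gkey (x - star x) (by rw [star_sub, star_star]; abel)
    have h3 := gkey (star x - x) (by rw [star_sub, star_star]; abel)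
    rw [map_sub] at h2 h3
    linarith
  have g1 : g 1 = 1 := by rw [gS 1 hone, ψ_one, Complex.one_re]
  have gI1 : g (Complex.I • (1:A)) = 0 := by
    rw [gS _ (S.smul_mem Complex.I hone)]
    have e : (⟨Complex.I • (1:A), S.smul_mem Complex.I hone⟩ : S)
        = Complex.I • (⟨1, hone⟩ : S) := rfl
    rw [e, map_smul, ψ_one, smul_eq_mul, mul_one, Complex.I_re]
  have gIP : ∀ a ∈ P, g (Complex.I • a) = 0 := fun a ha => g_I_zero hP g gP gstar ha
  have gIh : ∀ x : A, g (Complex.I • (x + star x)) = 0 := by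
    intro x
    obtain ⟨s, hs0, hs⟩ := lower_nonneg hP (hm_star x)
    have h1 := gIP _ hs
    have e : Complex.I • ((s:ℂ) • (1:A) + (x + star x))
        = s • (Complex.I • (1:A)) + Complex.I • (x + star x) := by
      rw [smul_add, ← Complex.coe_smul, smul_smul, smul_smul, mul_comm]
    rw [e, map_add, map_smul, gI1, smul_eq_mul, mul_zero, zero_add] at h1
    exact h1
  -- assemble the complex-linear functional
  have hdecomp : ∀ (c : ℂ) (x : A), c • x = c.re • x + c.im • (Complex.I • x) := by
    intro c x
    rw [← Complex.coe_smul, ← Complex.coe_smul, smul_smul, ← add_smul]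
    rw [Complex.re_add_im]
  have hIdecomp : ∀ (c : ℂ) (x : A),
      Complex.I • (c • x) = c.re • (Complex.I • x) + (-c.im) • x := by
    intro c x
    rw [← Complex.coe_smul, ← Complex.coe_smul, smul_smul, smul_smul, ← add_smul]
    congr 1
    simp [Complex.ext_iff]
  let φ : A →ₗ[ℂ] ℂ :=
    { toFun := fun x => ⟨g x, - g (Complex.I • x)⟩
      map_add' := by
        intro x y
        apply Complex.ext <;> simp [smul_add]
        ring
      map_smul' := by
        intro c x
        have hre : g (c • x) = c.re * g x + c.im * g (Complex.I • x) := by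
          rw [hdecomp c x, map_add, map_smul, map_smul, smul_eq_mul, smul_eq_mul]
        have him : g (Complex.I • (c • x)) = c.re * g (Complex.I • x) - c.im * g x := by
          rw [hIdecomp c x, map_add, LinearMap.map_smul, LinearMap.map_smul,
            smul_eq_mul, smul_eq_mul]
          ring
        apply Complex.ext <;>
          simp [hre, him, Complex.mul_re, Complex.mul_im] <;> ring }
  refine ⟨φ, ⟨?_, ?_, ?_⟩, ?_⟩
  · apply Complex.ext <;> simp [φ, g1, gI1]
  · intro x
    apply Complex.ext
    · simp [φ, gstar, Complex.conj_re]
    · show -g (Complex.I • star x) = (starRingEnd ℂ ⟨g x, -g (Complex.I • x)⟩).im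
      have h1 := gIh x
      rw [smul_add, map_add] at h1
      simp only [Complex.conj_im, Complex.neg_im]
      linarith
  · intro a ha
    refine ⟨g a, gP a ha, ?_⟩
    apply Complex.ext <;> simp [φ, gIP a ha]
  · intro x hx
    apply Complex.ext
    · simp [φ, gS x hx]
    · show -g (Complex.I • x) = (ψ ⟨x, hx⟩).im
      have e : (⟨Complex.I • x, S.smul_mem Complex.I hx⟩ : S)
          = Complex.I • (⟨x, hx⟩ : S) := rfl
      rw [gS _ (S.smul_mem Complex.I hx), e, map_smul]
      simp [Complex.mul_re]
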